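/- Let ε, ω, γ, β ∈ ℝ and suppose (p*, q*) ∈ ℝ^N × ℝ^N satisfies G(p*, q*; ε, ω, γ, β) = 0. Then the Fréchet derivative of G at (p*, q*) annihilates the vector v⁽¹⁾ = (−q*, p*): DG(p*, q*)(−q*, p*) = 0. In other words, 0 is an eigenvalue of the linearization about any damped and driven breather, with eigenvector (−q*, p*). -/

import Mathlib

/-- The discrete Laplacian on `Fin N → ℝ` with the boundary conventions
`(Δx)_1 = x_2 − x_1`, `(Δx)_N = x_{N−1} − x_N`. -/
def lap {N : ℕ} (x : Fin N → ℝ) (j : Fin N) : ℝ :=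
  (if h : j.val + 1 < N then x ⟨j.val + 1, h⟩ else x j)
  + (if 0 < j.val then x ⟨j.val - 1, lt_of_le_of_lt (Nat.sub_le _ _) j.isLt⟩ else x j)
  - 2 * x j

/-- The damped and driven dNLS vector field in the rotating frame, in real
coordinates `(p, q)`, with parameters `ε, ω, γ, β`. -/
def G (N : ℕ) (ε ω γ β : ℝ) (u : (Fin N → ℝ) × (Fin N → ℝ)) :
    (Fin N → ℝ) × (Fin N → ℝ) :=
  (fun j => ε * lap u.2 j + ω * u.2 j - (u.1 j ^ 2 + u.2 j ^ 2) * u.2 j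
      + (if j.val = 0 then β * u.1 j else 0)
      - (if j.val = N - 1 then γ * u.1 j else 0),
   fun j => -(ε * lap u.1 j) - ω * u.1 j + (u.1 j ^ 2 + u.2 j ^ 2) * u.1 j
      + (if j.val = 0 then β * u.2 j else 0)
      - (if j.val = N - 1 then γ * u.2 j else 0))

/-- `G` is differentiable (it is a polynomial map in the coordinates). -/
lemma G_diff (N : ℕ) (ε ω γ β : ℝ) : Differentiable ℝ (G N ε ω γ β) := by
  unfold G lap
  apply Differentiable.prodMk <;>
  · rw [differentiable_pi]
    intro j
    split_ifs <;> fun_prop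

/-- The discrete Laplacian is linear. -/
lemma lap_lin {N : ℕ} (a b : ℝ) (x y : Fin N → ℝ) (j : Fin N) :
    lap (a • x + b • y) j = a * lap x j + b * lap y j := by
  unfold lap
  split_ifs <;> simp [Pi.add_apply, Pi.smul_apply, smul_eq_mul] <;> ring

/-- `G` is equivariant under the gauge rotation, so the whole rotation orbit of a
breather consists of zeros of `G`. -/
lemma G_equivariant (N : ℕ) (ε ω γ β : ℝ) (u : (Fin N → ℝ) × (Fin N → ℝ))
    (hu : G N ε ω γ β u = 0) (θ : ℝ) :
    G N ε ω γ β (Real.cos θ • u.1 + (-Real.sin θ) • u.2,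
      Real.sin θ • u.1 + Real.cos θ • u.2) = 0 := by
  set S := Real.sin θ
  set C := Real.cos θ
  have hSC : S ^ 2 + C ^ 2 = 1 := Real.sin_sq_add_cos_sq θ
  have h1 : ∀ j : Fin N, ε * lap u.2 j + ω * u.2 j - (u.1 j ^ 2 + u.2 j ^ 2) * u.2 j
      + (if j.val = 0 then β * u.1 j else 0)
      - (if j.val = N - 1 then γ * u.1 j else 0) = 0 := by
    intro j
    have := congrFun (congrArg Prod.fst hu) j
    simpa [G] using this
  have h2 : ∀ j : Fin N, -(ε * lap u.1 j) - ω * u.1 j + (u.1 j ^ 2 + u.2 j ^ 2) * u.1 j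
      + (if j.val = 0 then β * u.2 j else 0)
      - (if j.val = N - 1 then γ * u.2 j else 0) = 0 := by
    intro j
    have := congrFun (congrArg Prod.snd hu) j
    simpa [G] using this
  have hzero : (0 : (Fin N → ℝ) × (Fin N → ℝ)) = (fun _ => 0, fun _ => 0) := rfl
  rw [hzero, G, Prod.mk.injEq]
  constructor <;> funext j <;>
    simp only [lap_lin, Pi.add_apply, Pi.smul_apply, smul_eq_mul]
  · have e1 := h1 j
    have e2 := h2 j
    split_ifs at e1 e2 ⊢ <;>
      linear_combination C * e1 - S * e2 -
        ((u.1 j ^ 2 + u.2 j ^ 2) * (S * u.1 j + C * u.2 j)) * hSC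
  · have e1 := h1 j
    have e2 := h2 j
    split_ifs at e1 e2 ⊢ <;>
      linear_combination S * e1 + C * e2 +
        ((u.1 j ^ 2 + u.2 j ^ 2) * (C * u.1 j - S * u.2 j)) * hSC

/-- The linearization of `G` about any damped and driven breather `(p*, q*)`
annihilates the vector `v⁽¹⁾ = (−q*, p*)`: zero is an eigenvalue with this
eigenvector. -/
theorem stmt_5 (N : ℕ) (hN : 2 ≤ N) (ε ω γ β : ℝ)
    (u : (Fin N → ℝ) × (Fin N → ℝ)) (hu : G N ε ω γ β u = 0) :
    fderiv ℝ (G N ε ω γ β) u (-u.2, u.1) = 0 := by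
  set c : ℝ → (Fin N → ℝ) × (Fin N → ℝ) := fun θ =>
    (Real.cos θ • u.1 + (-Real.sin θ) • u.2, Real.sin θ • u.1 + Real.cos θ • u.2) with hc
  have hc0 : c 0 = u := by simp [hc]
  have hcd : HasDerivAt c (-u.2, u.1) 0 := by
    have hA : HasDerivAt (fun θ : ℝ => Real.cos θ • u.1 + (-Real.sin θ) • u.2)
        ((-Real.sin 0) • u.1 + (-Real.cos 0) • u.2) 0 :=
      ((Real.hasDerivAt_cos 0).smul_const u.1).add
        (((Real.hasDerivAt_sin 0).neg).smul_const u.2)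
    have hB : HasDerivAt (fun θ : ℝ => Real.sin θ • u.1 + Real.cos θ • u.2)
        ((Real.cos 0) • u.1 + (-Real.sin 0) • u.2) 0 :=
      ((Real.hasDerivAt_sin 0).smul_const u.1).add
        ((Real.hasDerivAt_cos 0).smul_const u.2)
    have := hA.prodMk hB
    simpa [hc, neg_smul] using this
  have hF : HasFDerivAt (G N ε ω γ β) (fderiv ℝ (G N ε ω γ β) u) (c 0) := by
    rw [hc0]; exact (G_diff N ε ω γ β u).hasFDerivAt
  have hcomp := hF.comp_hasDerivAt 0 hcd
  have hzero : (fun θ => G N ε ω γ β (c θ)) = fun _ => (0 : (Fin N → ℝ) × (Fin N → ℝ)) :=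
    funext fun θ => G_equivariant N ε ω γ β u hu θ
  rw [show (G N ε ω γ β ∘ c) = fun θ => G N ε ω γ β (c θ) from rfl, hzero] at hcomp
  exact hcomp.unique (hasDerivAt_const 0 0)
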